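/- Let ℓ : V → ℝ be a linear functional and let w ∈ V be the unique element satisfying p(w, v) = ℓ(v) for all v ∈ V (Riesz representative of ℓ with respect to p). Define η := sup over v ∈ V, v ≠ 0, of ℓ(v)/√(a(v,v)), and η̃ := √(p(w,w)). Then γ·η ≤ η̃ ≤ Γ·η. (This shows that the preconditioned approximation η̃ of a dual-norm stabilization estimator is equivalent to the estimator up to the spectral equivalence constants.) -/
import Mathlib

/-- Cauchy–Schwarz for a symmetric positive semidefinite bilinear form. -/
lemma cs_aux {V : Type} [AddCommGroup V] [Module ℝ V]
    (p : V →ₗ[ℝ] V →ₗ[ℝ] ℝ)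
    (hp_symm : ∀ v w : V, p v w = p w v)
    (hp_nonneg : ∀ v : V, 0 ≤ p v v)
    (w v : V) (hv : 0 < p v v) : (p w v) ^ 2 ≤ p w w * p v v := by
  set t : ℝ := p w v / p v v with ht
  have h0 : 0 ≤ p (w - t • v) (w - t • v) := hp_nonneg _
  have hexp : p (w - t • v) (w - t • v)
      = p w w - 2 * t * p w v + t ^ 2 * p v v := by
    simp only [map_sub, map_smul, LinearMap.sub_apply, LinearMap.smul_apply,
      smul_eq_mul]
    rw [hp_symm v w]; ring
  rw [hexp, ht] at h0
  have hne : p v v ≠ 0 := ne_of_gt hv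
  have hq : 2 * (p w v / p v v) * p w v - (p w v / p v v) ^ 2 * p v v
      = (p w v) ^ 2 / p v v := by
    field_simp; ring
  have h2 : (p w v) ^ 2 / p v v ≤ p w w := by linarith
  linarith [(div_le_iff₀ hv).mp h2]

/-- Spectral equivalence of the preconditioned approximation of a dual-norm estimator:
if `γ √(p(v,v)) ≤ √(a(v,v)) ≤ Γ √(p(v,v))` for all `v`, `w` is the Riesz representative of
a linear functional `ℓ` with respect to `p`, `η` is the dual norm of `ℓ` with respect to
the `a`-norm and `η̃ = √(p(w,w))`, then `γ η ≤ η̃ ≤ Γ η`. -/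
theorem preconditioned_dual_norm_equivalence
    {V : Type} [AddCommGroup V] [Module ℝ V] [FiniteDimensional ℝ V] [Nontrivial V]
    (a p : V →ₗ[ℝ] V →ₗ[ℝ] ℝ)
    (ha_symm : ∀ v w : V, a v w = a w v)
    (hp_symm : ∀ v w : V, p v w = p w v)
    (ha_pos : ∀ v : V, v ≠ 0 → 0 < a v v)
    (hp_pos : ∀ v : V, v ≠ 0 → 0 < p v v)
    (γ Γ : ℝ) (hγ : 0 < γ) (hΓ : 0 < Γ)
    (hspec : ∀ v : V, γ * Real.sqrt (p v v) ≤ Real.sqrt (a v v) ∧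
      Real.sqrt (a v v) ≤ Γ * Real.sqrt (p v v))
    (ℓ : V →ₗ[ℝ] ℝ) (w : V) (hw : ∀ v : V, p w v = ℓ v)
    (η ηtilde : ℝ)
    (hη : η = ⨆ v : {v : V // v ≠ 0}, ℓ v.1 / Real.sqrt (a v.1 v.1))
    (hηtilde : ηtilde = Real.sqrt (p w w)) :
    γ * η ≤ ηtilde ∧ ηtilde ≤ Γ * η := by
  have hp_nonneg : ∀ v : V, 0 ≤ p v v := fun v => by
    rcases eq_or_ne v 0 with rfl | h
    · simp
    · exact le_of_lt (hp_pos v h)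
  obtain ⟨v₀, hv₀⟩ := exists_ne (0 : V)
  haveI : Nonempty {v : V // v ≠ 0} := ⟨⟨v₀, hv₀⟩⟩
  -- pointwise bound: ℓ v / √(a v v) ≤ √(p w w)/γ for v ≠ 0
  have key : ∀ v : V, v ≠ 0 → ℓ v / Real.sqrt (a v v) ≤ Real.sqrt (p w w) / γ := by
    intro v hv
    have hpv := hp_pos v hv
    have hav := ha_pos v hv
    have hsa : 0 < Real.sqrt (a v v) := Real.sqrt_pos.mpr hav
    have hcs : (p w v) ^ 2 ≤ p w w * p v v := cs_aux p hp_symm hp_nonneg w v hpv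
    have h1 : ℓ v ≤ Real.sqrt (p w w) * Real.sqrt (p v v) := by
      rw [← hw v]
      calc p w v ≤ |p w v| := le_abs_self _
        _ = Real.sqrt ((p w v) ^ 2) := (Real.sqrt_sq_eq_abs _).symm
        _ ≤ Real.sqrt (p w w * p v v) := Real.sqrt_le_sqrt hcs
        _ = Real.sqrt (p w w) * Real.sqrt (p v v) := Real.sqrt_mul (hp_nonneg w) _
    have h2 : γ * Real.sqrt (p v v) ≤ Real.sqrt (a v v) := (hspec v).1
    rw [div_le_div_iff₀ hsa hγ]
    calc ℓ v * γ ≤ Real.sqrt (p w w) * Real.sqrt (p v v) * γ := by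
          nlinarith [Real.sqrt_nonneg (p v v), Real.sqrt_nonneg (p w w)]
      _ = Real.sqrt (p w w) * (γ * Real.sqrt (p v v)) := by ring
      _ ≤ Real.sqrt (p w w) * Real.sqrt (a v v) := by
          exact mul_le_mul_of_nonneg_left h2 (Real.sqrt_nonneg _)
  have hbdd : BddAbove (Set.range fun v : {v : V // v ≠ 0} =>
      ℓ v.1 / Real.sqrt (a v.1 v.1)) := by
    refine ⟨Real.sqrt (p w w) / γ, ?_⟩
    rintro x ⟨⟨v, hv⟩, rfl⟩
    exact key v hv
  have hη_le : η ≤ Real.sqrt (p w w) / γ := by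
    rw [hη]
    exact ciSup_le fun v => key v.1 v.2
  constructor
  · rw [hηtilde]
    calc γ * η ≤ γ * (Real.sqrt (p w w) / γ) := mul_le_mul_of_nonneg_left hη_le hγ.le
      _ = Real.sqrt (p w w) := by field_simp
  · rw [hηtilde]
    rcases eq_or_ne w 0 with rfl | hwne
    · have hη_nonneg : 0 ≤ η := by
        rw [hη]
        refine le_ciSup_of_le hbdd ⟨v₀, hv₀⟩ ?_
        simp [← hw v₀]
      simp only [map_zero, LinearMap.zero_apply, Real.sqrt_zero]
      positivity
    · have hpw := hp_pos w hwne
      have hspw : 0 < Real.sqrt (p w w) := Real.sqrt_pos.mpr hpw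
      have hlow : Real.sqrt (p w w) / Γ ≤ η := by
        rw [hη]
        refine le_ciSup_of_le hbdd ⟨w, hwne⟩ ?_
        rw [← hw w]
        have haw := ha_pos w hwne
        have hsaw : 0 < Real.sqrt (a w w) := Real.sqrt_pos.mpr haw
        rw [div_le_div_iff₀ hΓ hsaw]
        have h2 : Real.sqrt (a w w) ≤ Γ * Real.sqrt (p w w) := (hspec w).2
        have hsq : Real.sqrt (p w w) * Real.sqrt (p w w) = p w w :=
          Real.mul_self_sqrt (hp_nonneg w)
        nlinarith [Real.sqrt_nonneg (p w w)]
      calc Real.sqrt (p w w) = Γ * (Real.sqrt (p w w) / Γ) := by field_simp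
        _ ≤ Γ * η := mul_le_mul_of_nonneg_left hlow hΓ.le
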